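/- arXiv:1206.3031 — 2 statements merged into one kernel-verified Lean document; each statement's English description precedes it below -/
import Mathlib

section
/- Let p, q be probability distributions on a finite set U with p_u > 0 for all u, and suppose q_u = p_u − τ D_u for all u, where 0 ≤ τ ≤ 1 and D : U → ℝ. Then d²_H(p,q) ≤ τ² ∑_{u∈U} D_u²/p_u. -/
lemma sqrt_one_add_lb (y : ℝ) (hy : -1 ≤ y) :
    1 + y/2 - y^2/2 ≤ Real.sqrt (1+y) := by
  have hs := Real.sq_sqrt (by linarith : (0:ℝ) ≤ 1+y)
  have hs0 := Real.sqrt_nonneg (1+y)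
  nlinarith [mul_nonneg (mul_nonneg hs0 (sq_nonneg (Real.sqrt (1+y) - 1)))
    (by linarith : (0:ℝ) ≤ Real.sqrt (1+y) + 2)]

lemma pointwise_lb (a b : ℝ) (ha : 0 < a) (hb : 0 ≤ b) :
    a + (b - a)/2 - (b - a)^2/(2*a) ≤ Real.sqrt (a * b) := by
  have hy : -1 ≤ (b - a)/a := by
    rw [le_div_iff₀ ha]; linarith
  have h := sqrt_one_add_lb ((b - a)/a) hy
  have h1 : (1:ℝ) + (b - a)/a = b/a := by field_simp; ring
  rw [h1] at h
  have h2 : Real.sqrt (a * b) = a * Real.sqrt (b/a) := by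
    rw [show a * b = a^2 * (b/a) by field_simp,
      Real.sqrt_mul (sq_nonneg a), Real.sqrt_sq ha.le]
  rw [h2]
  have := mul_le_mul_of_nonneg_left h ha.le
  calc a + (b - a)/2 - (b - a)^2/(2*a)
      = a * (1 + (b - a)/a/2 - ((b - a)/a)^2/2) := by field_simp
    _ ≤ a * Real.sqrt (b/a) := this

theorem hellinger_sq_le_tau_sq {U : Type*} [Fintype U]
    (p q : U → ℝ) (D : U → ℝ) (τ : ℝ)
    (hp : ∀ u, 0 < p u) (hq : ∀ u, 0 ≤ q u)
    (hp1 : ∑ u, p u = 1) (hq1 : ∑ u, q u = 1)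
    (hτ0 : 0 ≤ τ) (hτ1 : τ ≤ 1)
    (hqD : ∀ u, q u = p u - τ * D u) :
    2 * (1 - ∑ u, Real.sqrt (p u * q u)) ≤ τ ^ 2 * ∑ u, (D u) ^ 2 / p u := by
  have key : ∑ u, (p u + (q u - p u)/2 - (q u - p u)^2/(2 * p u))
      ≤ ∑ u, Real.sqrt (p u * q u) :=
    Finset.sum_le_sum fun u _ => pointwise_lb (p u) (q u) (hp u) (hq u)
  have hsplit : ∑ u, (p u + (q u - p u)/2 - (q u - p u)^2/(2 * p u))
      = 1 - τ^2/2 * ∑ u, (D u)^2 / p u := by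
    rw [Finset.sum_sub_distrib, Finset.sum_add_distrib, hp1]
    have h1 : ∑ u, (q u - p u)/2 = 0 := by
      rw [← Finset.sum_div, Finset.sum_sub_distrib, hp1, hq1]; norm_num
    have h2 : ∑ u, (q u - p u)^2/(2 * p u) = τ^2/2 * ∑ u, (D u)^2 / p u := by
      rw [Finset.mul_sum]
      refine Finset.sum_congr rfl fun u _ => ?_
      rw [hqD u]
      have := (hp u).ne'
      field_simp
      ring
    rw [h1, h2]; ring
  rw [hsplit] at key
  linarith
end

section
/- Let Q be the rate matrix of a reversible, irreducible continuous-time Markov chain on a finite state space with stationary distribution π. Then the 'agreement probability' e(t) = ∑_i π_i P(Y_t = i | Y_0 = i) can be written as e(t) = ∑_i π_i² + ∑_{m≥2} c_m e^{−λ_m t}, where 0 < λ_2 ≤ λ_3 ≤ … are the nonzero eigenvalues of −Q (suitably symmetrized) and c_m ≥ 0 with c_2 > 0; consequently e is strictly decreasing in t. -/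
open NormedSpace Matrix
open scoped Nat

attribute [local instance] Matrix.linftyOpNormedRing Matrix.linftyOpNormedAlgebra

private lemma exp_mulVec_eigen' {S : Type*} [Fintype S] [DecidableEq S]
    (A : Matrix S S ℝ) (v : S → ℝ) (μ : ℝ) (h : A *ᵥ v = μ • v) :
    NormedSpace.exp A *ᵥ v = Real.exp μ • v := by
  have hpow : ∀ k : ℕ, (A ^ k) *ᵥ v = (μ ^ k) • v := by
    intro k
    induction k with
    | zero => simp
    | succ k ih =>
      rw [pow_succ, ← Matrix.mulVec_mulVec, h, Matrix.mulVec_smul, ih, smul_smul, pow_succ]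
      ring_nf
  let L : Matrix S S ℝ →ₗ[ℝ] (S → ℝ) :=
    { toFun := fun M => M *ᵥ v
      map_add' := fun M N => Matrix.add_mulVec M N v
      map_smul' := fun c M => by simp [Matrix.smul_mulVec] }
  let L' : Matrix S S ℝ →L[ℝ] (S → ℝ) := LinearMap.toContinuousLinearMap L
  have hsum : Summable fun k : ℕ => (k ! : ℝ)⁻¹ • A ^ k := expSeries_summable' (𝕂 := ℝ) A
  have h1 : NormedSpace.exp A *ᵥ v = L' (NormedSpace.exp A) := rfl
  rw [h1, exp_eq_tsum ℝ, L'.map_tsum hsum]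
  have h2 : ∀ k : ℕ, L' ((k ! : ℝ)⁻¹ • A ^ k) = ((k ! : ℝ)⁻¹ * μ ^ k) • v := by
    intro k
    show ((k ! : ℝ)⁻¹ • A ^ k) *ᵥ v = _
    rw [Matrix.smul_mulVec, hpow k, smul_smul]
  simp_rw [h2]
  rw [Summable.tsum_smul_const]
  · congr 1
    rw [Real.exp_eq_exp_ℝ, exp_eq_tsum_div]
    exact tsum_congr fun k => by rw [div_eq_inv_mul]
  · have := Real.summable_pow_div_factorial μ
    simpa [div_eq_inv_mul, mul_comm] using this

private lemma sum_range_getD {α : Type*} (g : α → ℝ) (dflt : α) :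
    ∀ l : List α, ∑ m ∈ Finset.range l.length, g (l.getD m dflt) = (l.map g).sum := by
  intro l
  induction l with
  | nil => simp
  | cons a l ih =>
    rw [List.length_cons, Finset.sum_range_succ']
    simp only [List.getD_cons_succ, List.getD_cons_zero, List.map_cons, List.sum_cons, ih]
    ring

theorem reversible_agreement_probability_spectral {S : Type*} [Fintype S] [DecidableEq S]
    (Q : Matrix S S ℝ) (π : S → ℝ)
    (hcard : 1 < Fintype.card S)
    (hQoff : ∀ i j, i ≠ j → 0 ≤ Q i j)
    (hQrow : ∀ i, ∑ j, Q i j = 0)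
    (hπpos : ∀ i, 0 < π i) (hπ1 : ∑ i, π i = 1)
    (hrev : ∀ i j, π i * Q i j = π j * Q j i)
    (hirr : ∀ t : ℝ, 0 < t → ∀ i j, 0 < NormedSpace.exp (t • Q) i j)
    (e : ℝ → ℝ) (he : ∀ t, e t = ∑ i, π i * NormedSpace.exp (t • Q) i i) :
    (∃ n : ℕ, 0 < n ∧ ∃ lam c : ℕ → ℝ,
      (∀ m < n, 0 < lam m) ∧ (∀ m, m + 1 < n → lam m ≤ lam (m + 1)) ∧
      (∀ m < n, 0 ≤ c m) ∧ 0 < c 0 ∧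
      (∀ t : ℝ, 0 ≤ t →
        e t = ∑ i, (π i) ^ 2 + ∑ m ∈ Finset.range n, c m * Real.exp (-(lam m) * t)))
    ∧ (∀ t t' : ℝ, 0 ≤ t → t < t' → e t' < e t) := by
  classical
  set d : S → ℝ := fun i => Real.sqrt (π i) with hd_def
  have hdpos : ∀ i, 0 < d i := fun i => Real.sqrt_pos.2 (hπpos i)
  have hd2 : ∀ i, d i ^ 2 = π i := fun i => Real.sq_sqrt (hπpos i).le
  have hdne : ∀ i, d i ≠ 0 := fun i => (hdpos i).ne'
  set D : Matrix S S ℝ := Matrix.diagonal d with hD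
  set E : Matrix S S ℝ := Matrix.diagonal (fun i => (d i)⁻¹) with hE
  have hDE : D * E = 1 := by
    rw [hD, hE, Matrix.diagonal_mul_diagonal]
    rw [show (fun i => d i * (d i)⁻¹) = fun _ => (1:ℝ) from funext fun i => mul_inv_cancel₀ (hdne i)]
    exact Matrix.diagonal_one
  have hED : E * D = 1 := by
    rw [hD, hE, Matrix.diagonal_mul_diagonal]
    rw [show (fun i => (d i)⁻¹ * d i) = fun _ => (1:ℝ) from funext fun i => inv_mul_cancel₀ (hdne i)]
    exact Matrix.diagonal_one
  set uD : (Matrix S S ℝ)ˣ := ⟨D, E, hDE, hED⟩ with huD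
  set A : Matrix S S ℝ := D * Q * E with hA_def
  have hAentry : ∀ i j, A i j = d i * Q i j * (d j)⁻¹ := by
    intro i j
    rw [hA_def, hD, hE, Matrix.mul_diagonal, Matrix.diagonal_mul]
  have hexpA : ∀ t : ℝ, NormedSpace.exp (t • A) = D * NormedSpace.exp (t • Q) * E := by
    intro t
    have key := Matrix.exp_units_conj uD (t • Q)
    have hcoe : (uD : Matrix S S ℝ) = D := rfl
    have hcoe' : ((uD⁻¹ : (Matrix S S ℝ)ˣ) : Matrix S S ℝ) = E := rfl
    rw [hcoe, hcoe'] at key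
    have h1 : t • A = D * (t • Q) * E := by
      rw [hA_def, mul_smul_comm, smul_mul_assoc]
    rw [h1, key]
  have hdiagQA : ∀ (t : ℝ) (i : S),
      NormedSpace.exp (t • Q) i i = NormedSpace.exp (t • A) i i := by
    intro t i
    rw [hexpA, hD, hE, Matrix.mul_diagonal, Matrix.diagonal_mul,
      mul_comm (d i), mul_assoc, mul_inv_cancel₀ (hdne i), mul_one]
  have hAsymm : A.IsHermitian := by
    show Aᴴ = A
    ext i j
    rw [Matrix.conjTranspose_apply, star_trivial, hAentry, hAentry]
    have h1 : d i ^ 2 * Q i j = d j ^ 2 * Q j i := by rw [hd2, hd2]; exact hrev i j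
    rw [← div_eq_mul_inv, ← div_eq_mul_inv, div_eq_div_iff (hdne i) (hdne j)]
    linear_combination -h1
  set U : Matrix S S ℝ := (hAsymm.eigenvectorUnitary : Matrix S S ℝ) with hU
  set μ : S → ℝ := hAsymm.eigenvalues with hμ
  have hUst : star U * U = 1 := Matrix.mem_unitaryGroup_iff'.mp (hAsymm.eigenvectorUnitary).2
  have hUst' : U * star U = 1 := Matrix.mem_unitaryGroup_iff.mp (hAsymm.eigenvectorUnitary).2
  have hspec : A = U * Matrix.diagonal μ * star U := by
    have h0 := hAsymm.spectral_theorem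
    simpa using h0
  -- orthonormality of columns
  have horth : ∀ m m', (∑ i, U i m * U i m') = if m = m' then 1 else 0 := by
    intro m m'
    have h0 := congrFun (congrFun hUst m) m'
    rw [Matrix.mul_apply] at h0
    simp only [Matrix.star_apply, star_trivial] at h0
    rw [h0, Matrix.one_apply]
  -- exponential of t • A in spectral form
  set uU : (Matrix S S ℝ)ˣ := ⟨U, star U, hUst', hUst⟩ with huU
  have hexpdiag : ∀ t : ℝ, NormedSpace.exp (t • A)
      = U * Matrix.diagonal (fun m => Real.exp (t * μ m)) * star U := by
    intro t
    have key := Matrix.exp_units_conj uU (Matrix.diagonal (fun m => t * μ m))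
    have hcoe : (uU : Matrix S S ℝ) = U := rfl
    have hcoe' : ((uU⁻¹ : (Matrix S S ℝ)ˣ) : Matrix S S ℝ) = star U := rfl
    rw [hcoe, hcoe'] at key
    have h1 : t • A = U * Matrix.diagonal (fun m => t * μ m) * star U := by
      rw [hspec, show (fun m => t * μ m) = t • μ from rfl, Matrix.diagonal_smul,
        mul_smul_comm, smul_mul_assoc]
    rw [h1, key, Matrix.exp_diagonal]
    have h2 : NormedSpace.exp (fun m => t * μ m) = fun m => Real.exp (t * μ m) := by
      rw [Pi.exp_def]
      exact funext fun m => (congrFun Real.exp_eq_exp_ℝ _).symm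
    rw [h2]
  set w : S → ℝ := fun m => ∑ i, π i * (U i m) ^ 2 with hw_def
  have hw0 : ∀ m, 0 ≤ w m := fun m =>
    Finset.sum_nonneg fun i _ => mul_nonneg (hπpos i).le (sq_nonneg _)
  -- main spectral формула for e
  have hediag : ∀ t : ℝ, e t = ∑ m, w m * Real.exp (t * μ m) := by
    intro t
    rw [he t]
    have h1 : ∀ i, NormedSpace.exp (t • Q) i i = ∑ m, (U i m) ^ 2 * Real.exp (t * μ m) := by
      intro i
      rw [hdiagQA, hexpdiag, Matrix.mul_apply]
      refine Finset.sum_congr rfl fun m _ => ?_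
      rw [Matrix.mul_diagonal, Matrix.star_apply, star_trivial]
      ring
    simp_rw [h1, Finset.mul_sum]
    rw [Finset.sum_comm]
    refine Finset.sum_congr rfl fun m _ => ?_
    rw [hw_def, Finset.sum_mul]
    exact Finset.sum_congr rfl fun i _ => by ring
  -- column eigenvectors
  have hcol : ∀ m, A *ᵥ (fun i => U i m) = μ m • (fun i => U i m) := by
    intro m
    have h0 := hAsymm.mulVec_eigenvectorBasis m
    have h1 : (fun i => U i m) = ⇑(hAsymm.eigenvectorBasis m) := by
      funext i
      exact hAsymm.eigenvectorUnitary_apply i m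
    rw [h1]
    exact h0
  -- transfer to Q-eigenvectors
  have hQeig : ∀ (u : S → ℝ) (μ0 : ℝ), A *ᵥ u = μ0 • u →
      Q *ᵥ (fun i => (d i)⁻¹ * u i) = μ0 • (fun i => (d i)⁻¹ * u i) := by
    intro u μ0 hu
    have hEu : E *ᵥ u = fun i => (d i)⁻¹ * u i := by
      funext i; rw [hE, Matrix.mulVec_diagonal]
    have h2 : E *ᵥ (A *ᵥ u) = Q *ᵥ (fun i => (d i)⁻¹ * u i) := by
      rw [Matrix.mulVec_mulVec]
      have hEA : E * A = Q * E := by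
        rw [hA_def, ← Matrix.mul_assoc, ← Matrix.mul_assoc, hED, Matrix.one_mul]
      rw [hEA, ← Matrix.mulVec_mulVec, hEu]
    rw [← h2, hu, Matrix.mulVec_smul, hEu]
  -- the transition matrix P at time 1
  set P : Matrix S S ℝ := NormedSpace.exp Q with hP
  have hPpos : ∀ i j, 0 < P i j := by
    have h0 : (1:ℝ) • Q = Q := one_smul _ _
    intro i j
    have := hirr 1 one_pos i j
    rwa [h0] at this
  have hProw : ∀ i, ∑ j, P i j = 1 := by
    have h0 : Q *ᵥ (fun _ => (1:ℝ)) = (0:ℝ) • (fun _ => (1:ℝ)) := by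
      funext i
      simp [Matrix.mulVec, dotProduct, hQrow i]
    have h1 := exp_mulVec_eigen' Q (fun _ => (1:ℝ)) 0 h0
    intro i
    have h2 := congrFun h1 i
    simp only [Matrix.mulVec, dotProduct, mul_one, Real.exp_zero, one_smul] at h2
    simpa using h2
  -- eigenvalues are nonpositive
  haveI hnonempty : Nonempty S := Fintype.card_pos_iff.mp (by omega)
  have hμle : ∀ m, μ m ≤ 0 := by
    intro m
    set u : S → ℝ := fun i => U i m with hu_def
    have hQf := hQeig u (μ m) (hcol m)
    set f : S → ℝ := fun i => (d i)⁻¹ * u i with hf_def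
    have hPf : P *ᵥ f = Real.exp (μ m) • f := exp_mulVec_eigen' Q f (μ m) hQf
    have hune : ∃ i, U i m ≠ 0 := by
      by_contra hc
      push_neg at hc
      have h9 := horth m m
      simp only [if_pos rfl] at h9
      rw [Finset.sum_eq_zero (fun i _ => by rw [hc i, zero_mul])] at h9
      norm_num at h9
    obtain ⟨i0, _, hi0⟩ := Finset.exists_max_image Finset.univ (fun i => |f i|)
      Finset.univ_nonempty
    have hfi0 : 0 < |f i0| := by
      obtain ⟨j, hj⟩ := hune
      have : f j ≠ 0 := mul_ne_zero (inv_ne_zero (hdne j)) hj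
      calc 0 < |f j| := abs_pos.2 this
        _ ≤ |f i0| := hi0 j (Finset.mem_univ j)
    have key : Real.exp (μ m) * |f i0| ≤ |f i0| := by
      have h3 : (P *ᵥ f) i0 = Real.exp (μ m) * f i0 := by rw [hPf]; rfl
      have h4 : |(P *ᵥ f) i0| ≤ |f i0| := by
        rw [Matrix.mulVec, dotProduct]
        calc |∑ j, P i0 j * f j| ≤ ∑ j, |P i0 j * f j| := Finset.abs_sum_le_sum_abs _ _
          _ = ∑ j, P i0 j * |f j| := Finset.sum_congr rfl fun j _ => by
              rw [abs_mul, abs_of_pos (hPpos i0 j)]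
          _ ≤ ∑ j, P i0 j * |f i0| := Finset.sum_le_sum fun j _ =>
              mul_le_mul_of_nonneg_left (hi0 j (Finset.mem_univ j)) (hPpos i0 j).le
          _ = |f i0| := by rw [← Finset.sum_mul, hProw i0, one_mul]
      rw [h3, abs_mul, abs_of_pos (Real.exp_pos _)] at h4
      exact h4
    have : Real.exp (μ m) ≤ 1 := le_of_mul_le_mul_right (by linarith [key]) hfi0
    exact Real.exp_le_one_iff.mp this
  -- kernel vectors are multiples of d
  have hker : ∀ m, μ m = 0 → ∃ c : ℝ, c ^ 2 = 1 ∧ ∀ i, U i m = d i * c := by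
    intro m hm
    set u : S → ℝ := fun i => U i m with hu_def
    have hQf := hQeig u (μ m) (hcol m)
    set f : S → ℝ := fun i => (d i)⁻¹ * u i with hf_def
    have hPf : P *ᵥ f = f := by
      have := exp_mulVec_eigen' Q f (μ m) hQf
      rwa [hm, Real.exp_zero, one_smul] at this
    obtain ⟨i0, _, hi0⟩ := Finset.exists_max_image Finset.univ f Finset.univ_nonempty
    have hconst : ∀ j, f j = f i0 := by
      by_contra hc
      push_neg at hc
      obtain ⟨j0, hj0⟩ := hc
      have hj0' : f j0 < f i0 := lt_of_le_of_ne (hi0 j0 (Finset.mem_univ j0)) hj0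
      have h5 : (P *ᵥ f) i0 = f i0 := by rw [hPf]
      rw [Matrix.mulVec, dotProduct] at h5
      have h6 : ∑ j, P i0 j * f j < ∑ j, P i0 j * f i0 :=
        Finset.sum_lt_sum (fun j _ => mul_le_mul_of_nonneg_left
            (hi0 j (Finset.mem_univ j)) (hPpos i0 j).le)
          ⟨j0, Finset.mem_univ j0, mul_lt_mul_of_pos_left hj0' (hPpos i0 j0)⟩
      rw [h5] at h6
      rw [← Finset.sum_mul, hProw i0, one_mul] at h6
      exact lt_irrefl _ h6
    have h7 : ∀ i, U i m = d i * f i0 := by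
      intro i
      have hfi : (d i)⁻¹ * U i m = f i0 := hconst i
      calc U i m = d i * ((d i)⁻¹ * U i m) := by
            rw [← mul_assoc, mul_inv_cancel₀ (hdne i), one_mul]
        _ = d i * f i0 := by rw [hfi]
    refine ⟨f i0, ?_, h7⟩
    · have h8 := horth m m
      simp only [if_pos rfl] at h8
      rw [show (∑ i, U i m * U i m) = (f i0)^2 * ∑ i, π i from by
        rw [Finset.mul_sum]
        exact Finset.sum_congr rfl fun i _ => by rw [h7 i, ← hd2 i]; ring] at h8
      rw [hπ1, mul_one] at h8
      exact h8
  -- existence of a zero eigenvalue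
  have hAd : A *ᵥ d = (0:ℝ) • d := by
    funext i
    show ∑ j, A i j * d j = ((0:ℝ) • d) i
    have hterm : ∀ j, A i j * d j = d i * Q i j := by
      intro j; rw [hAentry i j, mul_assoc, inv_mul_cancel₀ (hdne j), mul_one]
    rw [Finset.sum_congr rfl fun j _ => hterm j, ← Finset.mul_sum, hQrow i, mul_zero]
    simp
  have hzero : ∃ m, μ m = 0 := by
    by_contra hc
    push_neg at hc
    set wv : S → ℝ := star U *ᵥ d with hwv
    have h1 : Matrix.diagonal μ *ᵥ wv = 0 := by
      have h2 : (star U * (U * Matrix.diagonal μ * star U)) *ᵥ d = star U *ᵥ ((0:ℝ) • d) := by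
        rw [← Matrix.mulVec_mulVec, ← hspec, hAd]
      rw [show star U * (U * Matrix.diagonal μ * star U) = Matrix.diagonal μ * star U from by
        rw [← Matrix.mul_assoc, ← Matrix.mul_assoc, hUst, Matrix.one_mul]] at h2
      rw [← Matrix.mulVec_mulVec] at h2
      rw [h2]
      rw [zero_smul, Matrix.mulVec_zero]
    have hwv0 : wv = 0 := by
      funext m
      have h3 := congrFun h1 m
      rw [Matrix.mulVec_diagonal] at h3
      rcases mul_eq_zero.mp h3 with h | h
      · exact absurd h (hc m)
      · exact h
    obtain ⟨i0⟩ := hnonempty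
    have hd0 : d = U *ᵥ wv := by
      rw [hwv, Matrix.mulVec_mulVec, hUst', Matrix.one_mulVec]
    rw [hwv0, Matrix.mulVec_zero] at hd0
    exact (hdne i0) (by rw [hd0]; rfl)
  obtain ⟨m0, hm0⟩ := hzero
  have hZ : ∀ m, μ m = 0 → m = m0 := by
    intro m hm
    by_contra hne
    obtain ⟨c1, hc1, hUc1⟩ := hker m hm
    obtain ⟨c2, hc2, hUc2⟩ := hker m0 hm0
    have h4 := horth m m0
    rw [if_neg hne] at h4
    rw [Finset.sum_congr rfl (fun i _ => by rw [hUc1 i, hUc2 i])] at h4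
    have h5 : (∑ i, (d i * c1) * (d i * c2)) = c1 * c2 := by
      have h6 : ∀ i : S, (d i * c1) * (d i * c2) = c1 * c2 * π i := fun i => by
        rw [← hd2 i]; ring
      rw [Finset.sum_congr rfl fun i _ => h6 i, ← Finset.mul_sum, hπ1, mul_one]
    rw [h5] at h4
    have hc1ne : c1 ≠ 0 := fun h => by rw [h] at hc1; norm_num at hc1
    have hc2ne : c2 ≠ 0 := fun h => by rw [h] at hc2; norm_num at hc2
    exact absurd h4 (mul_ne_zero hc1ne hc2ne)
  have hwm0 : w m0 = ∑ i, π i ^ 2 := by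
    obtain ⟨c2, hc2, hUc2⟩ := hker m0 hm0
    show (∑ i, π i * (U i m0) ^ 2) = _
    rw [Finset.sum_congr rfl (fun i _ => by rw [hUc2 i])]
    have h6 : ∀ i : S, π i * (d i * c2) ^ 2 = π i ^ 2 * c2 ^ 2 := fun i => by
      rw [← hd2 i]; ring
    rw [Finset.sum_congr rfl fun i _ => h6 i, ← Finset.sum_mul, hc2, mul_one]
  have hμneg : ∀ m, m ≠ m0 → μ m < 0 := fun m hm =>
    lt_of_le_of_ne (hμle m) (fun h => hm (hZ m h))
  set F' : Finset S := (Finset.univ.erase m0).filter (fun m => 0 < w m) with hF'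
  have he2 : ∀ t : ℝ, e t = (∑ i, π i ^ 2) + ∑ m ∈ F', w m * Real.exp (t * μ m) := by
    intro t
    rw [hediag t, ← Finset.add_sum_erase Finset.univ _ (Finset.mem_univ m0)]
    congr 1
    · rw [hm0, mul_zero, Real.exp_zero, mul_one, hwm0]
    · symm
      apply Finset.sum_subset (Finset.filter_subset _ _)
      intro m hm hnot
      have h7 : ¬ 0 < w m := fun hpos => hnot (Finset.mem_filter.mpr ⟨hm, hpos⟩)
      rw [le_antisymm (not_lt.mp h7) (hw0 m), zero_mul]
  have he0 : e 0 = 1 := by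
    rw [he 0, show (0:ℝ) • Q = 0 from zero_smul _ _, exp_zero]
    simp only [Matrix.one_apply_eq, mul_one]
    exact hπ1
  have hππ : (∑ i, π i ^ 2) < 1 := by
    have hlt : ∀ i, π i < 1 := by
      intro i
      obtain ⟨j, hj⟩ := Fintype.exists_ne_of_one_lt_card hcard i
      have h2 : π j ≤ ∑ k ∈ Finset.univ.erase i, π k :=
        Finset.single_le_sum (fun k _ => (hπpos k).le)
          (Finset.mem_erase.mpr ⟨hj, Finset.mem_univ j⟩)
      have h3 : π i + ∑ k ∈ Finset.univ.erase i, π k = 1 := by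
        rw [Finset.add_sum_erase _ _ (Finset.mem_univ i), hπ1]
      linarith [hπpos j]
    calc (∑ i, π i ^ 2) < ∑ i, π i :=
          Finset.sum_lt_sum_of_nonempty Finset.univ_nonempty
            (fun i _ => by nlinarith [hπpos i, hlt i])
      _ = 1 := hπ1
  have hF'ne : F'.Nonempty := by
    rw [Finset.nonempty_iff_ne_empty]
    intro hcc
    have h8 := he2 0
    rw [hcc, Finset.sum_empty, add_zero, he0] at h8
    linarith
  set gfun : ℝ × ℝ → ℝ → ℝ := fun p t => p.2 * Real.exp (-p.1 * t) with hgfun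
  set keyf : S → ℝ × ℝ := fun m => (-μ m, w m) with hkeyf
  set l0 : List (ℝ × ℝ) := F'.toList.map keyf with hl0
  set L : List (ℝ × ℝ) := l0.mergeSort (fun p q => decide (p.1 ≤ q.1)) with hLdef
  have hperm : L.Perm l0 := List.mergeSort_perm l0 _
  have hsorted : List.Pairwise (fun p q : ℝ × ℝ => p.1 ≤ q.1) L := by
    have h9 := List.pairwise_mergeSort (le := fun p q : ℝ × ℝ => decide (p.1 ≤ q.1))
      (fun a b c h1 h2 => by
        simp only [decide_eq_true_eq] at *
        exact le_trans h1 h2)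
      (fun a b => by simpa using le_total a.1 b.1) l0
    exact h9.imp (fun h => by simpa using h)
  have hmemL : ∀ p ∈ L, (0 < p.1 ∧ 0 < p.2) := by
    intro p hp
    have hp0 : p ∈ l0 := hperm.mem_iff.mp hp
    rw [hl0, List.mem_map] at hp0
    obtain ⟨m, hmF, rfl⟩ := hp0
    rw [Finset.mem_toList, hF', Finset.mem_filter, Finset.mem_erase] at hmF
    exact ⟨neg_pos.mpr (hμneg m hmF.1.1), hmF.2⟩
  set n : ℕ := L.length with hn
  have hn0 : 0 < n := by
    have h10 : l0.length = F'.card := by rw [hl0, List.length_map, Finset.length_toList]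
    rw [hn, hLdef, List.length_mergeSort, h10]
    exact Finset.card_pos.mpr hF'ne
  set dflt : ℝ × ℝ := (1, 0) with hdflt
  set lam : ℕ → ℝ := fun m => (L.getD m dflt).1 with hlamdef
  set c : ℕ → ℝ := fun m => (L.getD m dflt).2 with hcdef
  have hgetmem : ∀ m, m < n → L.getD m dflt ∈ L := by
    intro m hm
    rw [List.getD_eq_getElem L dflt hm]
    exact List.getElem_mem hm
  have hlampos : ∀ m, m < n → 0 < lam m := fun m hm => (hmemL _ (hgetmem m hm)).1
  have hcnonneg : ∀ m, m < n → 0 ≤ c m := fun m hm => (hmemL _ (hgetmem m hm)).2.le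
  have hc0 : 0 < c 0 := (hmemL _ (hgetmem 0 hn0)).2
  have hmono : ∀ m, m + 1 < n → lam m ≤ lam (m + 1) := by
    intro m hm
    have hm' : m < n := Nat.lt_of_succ_lt hm
    have h11 := hsorted.rel_get_of_lt (a := ⟨m, hm'⟩) (b := ⟨m + 1, hm⟩)
      (Fin.mk_lt_mk.mpr (Nat.lt_succ_self m))
    have e1 : L.getD m dflt = L.get ⟨m, hm'⟩ := by
      rw [List.getD_eq_getElem L dflt hm']; rfl
    have e2 : L.getD (m + 1) dflt = L.get ⟨m + 1, hm⟩ := by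
      rw [List.getD_eq_getElem L dflt hm]; rfl
    show (L.getD m dflt).1 ≤ (L.getD (m + 1) dflt).1
    rw [e1, e2]
    exact h11
  have hsum_eq : ∀ t : ℝ, ∑ m ∈ Finset.range n, c m * Real.exp (-(lam m) * t)
      = ∑ m ∈ F', w m * Real.exp (t * μ m) := by
    intro t
    calc ∑ m ∈ Finset.range n, c m * Real.exp (-(lam m) * t)
        = (L.map (fun p => gfun p t)).sum := sum_range_getD (fun p => gfun p t) dflt L
      _ = (l0.map (fun p => gfun p t)).sum := ((hperm.map _).sum_eq)
      _ = ∑ m ∈ F', w m * Real.exp (t * μ m) := by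
          rw [hl0, List.map_map]
          refine (Finset.sum_map_toList _ _).trans ?_
          refine Finset.sum_congr rfl fun m _ => ?_
          show w m * Real.exp (-(-μ m) * t) = w m * Real.exp (t * μ m)
          rw [neg_neg, mul_comm (μ m) t]
  have hformula : ∀ t : ℝ, 0 ≤ t →
      e t = (∑ i, π i ^ 2) + ∑ m ∈ Finset.range n, c m * Real.exp (-(lam m) * t) :=
    fun t _ => by rw [he2 t, hsum_eq t]
  refine ⟨⟨n, hn0, lam, c, hlampos, hmono, hcnonneg, hc0, hformula⟩, ?_⟩
  intro t t' ht htt'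
  rw [hformula t ht, hformula t' (le_trans ht htt'.le)]
  have hlt : ∑ m ∈ Finset.range n, c m * Real.exp (-(lam m) * t')
      < ∑ m ∈ Finset.range n, c m * Real.exp (-(lam m) * t) := by
    apply Finset.sum_lt_sum
    · intro m hm
      rw [Finset.mem_range] at hm
      refine mul_le_mul_of_nonneg_left ?_ (hcnonneg m hm)
      refine Real.exp_le_exp.mpr ?_
      nlinarith [hlampos m hm]
    · refine ⟨0, Finset.mem_range.mpr hn0, ?_⟩
      refine mul_lt_mul_of_pos_left ?_ hc0
      refine Real.exp_lt_exp.mpr ?_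
      nlinarith [hlampos 0 hn0]
  linarith
end
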